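/- arXiv:1307.2140 — 5 statements merged into one kernel-verified Lean document; each statement's English description precedes it below -/
import Mathlib

section
/- Let V be a finite-dimensional vector space and N : V → V nilpotent. If W_• and W'_• are two increasing filtrations of V, each satisfying N(W_k) ⊆ W_{k-2} and inducing isomorphisms N^k : Gr^W_k V ≅ Gr^W_{-k} V for all k ≥ 0, then W_k = W'_k for all k. That is, the monodromy filtration of a nilpotent endomorphism is unique. -/
open Submodule

/-- An increasing filtration `W` on `V`, exhaustive and separated, such that
`N (W k) ⊆ W (k-2)` and for every `k ≥ 0` the map induced by `N^k` gives an
isomorphism `Gr^W_k V → Gr^W_{-k} V` (injectivity `grInj` and surjectivity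
`grSurj` are stated at the level of submodules).  This is the monodromy
filtration of `N` centered at `0`. -/
structure IsMonodromyFiltration {K V : Type*} [Field K] [AddCommGroup V] [Module K V]
    (N : V →ₗ[K] V) (W : ℤ → Submodule K V) : Prop where
  mono : Monotone W
  exhaustive : ∃ a : ℤ, W a = ⊤
  separated : ∃ b : ℤ, W b = ⊥
  mapN : ∀ k : ℤ, (W k).map N ≤ W (k - 2)
  grInj : ∀ k : ℤ, 0 ≤ k → ∀ x ∈ W k, (N ^ k.toNat) x ∈ W (-k - 1) → x ∈ W (k - 1)
  grSurj : ∀ k : ℤ, 0 ≤ k → W (-k) ≤ (W k).map (N ^ k.toNat) ⊔ W (-k - 1)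

section Aux

variable {K V : Type*} [Field K] [AddCommGroup V] [Module K V]
variable {N : V →ₗ[K] V} {W W' : ℤ → Submodule K V}

/-- Iterated version of `mapN`. -/
lemma IsMonodromyFiltration.mapN_pow (hW : IsMonodromyFiltration N W) (j : ℕ) :
    ∀ (k : ℤ) (x : V), x ∈ W k → (N ^ j) x ∈ W (k - 2 * j) := by
  induction j with
  | zero => intro k x hx; simpa using hx
  | succ j ih =>
    intro k x hx
    have h1 : N x ∈ W (k - 2) := hW.mapN k ⟨x, hx, rfl⟩
    have h2 := ih (k - 2) (N x) h1
    have he : (N ^ (j + 1)) x = (N ^ j) (N x) := by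
      rw [pow_succ]; rfl
    rw [he, show k - 2 * ((j + 1 : ℕ) : ℤ) = k - 2 - 2 * (j : ℤ) by push_cast; ring]
    exact h2

lemma IsMonodromyFiltration.eq_top (hW : IsMonodromyFiltration N W) {n : ℕ}
    (hn : N ^ n = 0) : ∀ k : ℤ, (n : ℤ) ≤ k → W k = ⊤ := by
  have step : ∀ k : ℤ, (n : ℤ) ≤ k → W (k + 1) ≤ W k := by
    intro k hk x hx
    have hz : (N ^ (k + 1).toNat) x = 0 := by
      have : N ^ (k + 1).toNat = 0 := pow_eq_zero_of_le (by omega) hn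
      rw [this]; rfl
    have := hW.grInj (k + 1) (by omega) x hx (by rw [hz]; exact zero_mem _)
    simpa using this
  have constNat : ∀ d : ℕ, W ((n : ℤ) + d) ≤ W (n : ℤ) := by
    intro d
    induction d with
    | zero => simp
    | succ d ih =>
      exact le_trans (le_of_eq (congrArg W (by push_cast; ring)))
        (le_trans (step ((n : ℤ) + d) (by omega)) ih)
  have const : ∀ k : ℤ, (n : ℤ) ≤ k → W k ≤ W (n : ℤ) := by
    intro k hk
    have : k = (n : ℤ) + (k - n).toNat := by omega
    rw [this]; exact constNat _
  obtain ⟨a, ha⟩ := hW.exhaustive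
  have hn_top : W (n : ℤ) = ⊤ := by
    have h1 : W a ≤ W (max a (n : ℤ)) := hW.mono (le_max_left _ _)
    have h2 : W (max a (n : ℤ)) ≤ W (n : ℤ) := const _ (le_max_right _ _)
    rw [ha] at h1
    exact le_antisymm le_top (le_trans h1 h2)
  intro k hk
  exact le_antisymm le_top (hn_top ▸ hW.mono hk)

lemma IsMonodromyFiltration.eq_bot (hW : IsMonodromyFiltration N W) {n : ℕ}
    (hn : N ^ n = 0) : ∀ k : ℤ, k ≤ -(n : ℤ) → W k = ⊥ := by
  have step : ∀ k : ℤ, (n : ℤ) ≤ k → W (-k) ≤ W (-k - 1) := by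
    intro k hk
    have hz : (N ^ k.toNat : V →ₗ[K] V) = 0 := pow_eq_zero_of_le (by omega) hn
    have := hW.grSurj k (by omega)
    rwa [hz, Submodule.map_zero, bot_sup_eq] at this
  have constNat : ∀ d : ℕ, W (-(n : ℤ)) ≤ W (-((n : ℤ) + d)) := by
    intro d
    induction d with
    | zero => simp
    | succ d ih =>
      exact le_trans ih (le_trans (step ((n : ℤ) + d) (by omega))
        (le_of_eq (congrArg W (by push_cast; ring))))
  have const : ∀ k : ℤ, (n : ℤ) ≤ k → W (-(n : ℤ)) ≤ W (-k) := by
    intro k hk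
    have : k = (n : ℤ) + (k - n).toNat := by omega
    rw [this]; exact constNat _
  obtain ⟨b, hb⟩ := hW.separated
  have hn_bot : W (-(n : ℤ)) = ⊥ := by
    have h1 : W (-(n : ℤ)) ≤ W (-(max (n : ℤ) (-b))) := const _ (le_max_left _ _)
    have h2 : W (-(max (n : ℤ) (-b))) ≤ W b := hW.mono (by
      have := le_max_right (n : ℤ) (-b); omega)
    rw [hb] at h2
    exact le_antisymm (le_trans h1 h2) bot_le
  intro k hk
  exact le_antisymm (le_trans (hW.mono hk) (le_of_eq hn_bot)) bot_le

lemma pos_step (hW : IsMonodromyFiltration N W) (hW' : IsMonodromyFiltration N W')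
    (m : ℤ) (hm : 0 ≤ m) (h1 : W (m + 1) ≤ W' (m + 1)) (h2 : W (-m - 2) ≤ W' (-m - 2)) :
    W m ≤ W' m := by
  intro x hx
  have hx1 : x ∈ W' (m + 1) := h1 (hW.mono (by omega) hx)
  have hc : (((m + 1).toNat : ℤ)) = m + 1 := Int.toNat_of_nonneg (by omega)
  have hx2 : (N ^ (m + 1).toNat) x ∈ W (m - 2 * (((m + 1).toNat : ℕ) : ℤ)) :=
    hW.mapN_pow _ _ _ hx
  rw [hc, show m - 2 * (m + 1) = -m - 2 by ring] at hx2
  have hx3 : (N ^ (m + 1).toNat) x ∈ W' (-(m + 1) - 1) := by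
    rw [show -(m + 1) - 1 = -m - 2 by ring]
    exact h2 hx2
  have := hW'.grInj (m + 1) (by omega) x hx1 hx3
  simpa using this

lemma neg_step (hW : IsMonodromyFiltration N W) (hW' : IsMonodromyFiltration N W')
    (m : ℤ) (hm : 0 ≤ m) (h1 : W (m + 1) ≤ W' (m + 1)) (h2 : W (-m - 2) ≤ W' (-m - 2))
    (h3 : W (-m - 1) ≤ W' (-m - 1)) : W (-m) ≤ W' (-m) := by
  intro x hx
  have hs := hW.grSurj m hm hx
  rw [Submodule.mem_sup] at hs
  obtain ⟨y', hy', z, hz, hxyz⟩ := hs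
  rw [Submodule.mem_map] at hy'
  obtain ⟨y, hy, rfl⟩ := hy'
  have hy1 : y ∈ W' (m + 1) := h1 (hW.mono (by omega) hy)
  have hc1 : (((m + 1).toNat : ℤ)) = m + 1 := Int.toNat_of_nonneg (by omega)
  have hy2 : (N ^ (m + 1).toNat) y ∈ W (m - 2 * (((m + 1).toNat : ℕ) : ℤ)) :=
    hW.mapN_pow _ _ _ hy
  rw [hc1, show m - 2 * (m + 1) = -m - 2 by ring] at hy2
  have hy3 : (N ^ (m + 1).toNat) y ∈ W' (-(m + 1) - 1) := by
    rw [show -(m + 1) - 1 = -m - 2 by ring]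
    exact h2 hy2
  have hy4 : y ∈ W' m := by simpa using hW'.grInj (m + 1) (by omega) y hy1 hy3
  have hc0 : ((m.toNat : ℤ)) = m := Int.toNat_of_nonneg hm
  have hy5 : (N ^ m.toNat) y ∈ W' (m - 2 * ((m.toNat : ℕ) : ℤ)) := hW'.mapN_pow _ _ _ hy4
  rw [hc0, show m - 2 * m = -m by ring] at hy5
  have hz' : z ∈ W' (-m) := hW'.mono (by omega) (h3 hz)
  rw [← hxyz]
  exact (W' (-m)).add_mem hy5 hz'

lemma le_all (hW : IsMonodromyFiltration N W) (hW' : IsMonodromyFiltration N W')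
    {n : ℕ} (hn : N ^ n = 0) : ∀ k : ℤ, W k ≤ W' k := by
  have H : ∀ j : ℕ, ∀ k : ℤ, (n : ℤ) - j ≤ |k| → W k ≤ W' k := by
    intro j
    induction j with
    | zero =>
      intro k hk
      rcases le_or_gt 0 k with h | h
      · have hk' : (n : ℤ) ≤ k := by rw [abs_of_nonneg h] at hk; omega
        rw [hW'.eq_top hn k hk']
        exact le_top
      · have hk' : k ≤ -(n : ℤ) := by rw [abs_of_neg h] at hk; omega
        rw [hW.eq_bot hn k hk']
        exact bot_le
    | succ j ih =>
      intro k hk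
      by_cases h : (n : ℤ) - j ≤ |k|
      · exact ih k h
      · push_neg at h
        have habs : ∀ k' : ℤ, |k| + 1 ≤ |k'| → W k' ≤ W' k' := by
          intro k' hk'
          apply ih
          push_cast at hk
          omega
        rcases le_or_gt 0 k with hpos | hneg
        · have hkm : |k| = k := abs_of_nonneg hpos
          refine pos_step hW hW' k hpos (habs _ ?_) (habs _ ?_) <;> rw [abs_of_nonneg hpos]
          · rw [abs_of_nonneg (by omega)]
          · rw [abs_of_nonpos (by omega)]; omega
        · have hk2 : k = -(-k) := by ring
          rw [hk2]
          refine neg_step hW hW' (-k) (by omega) (habs _ ?_) (habs _ ?_) (habs _ ?_) <;>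
            rw [abs_of_neg hneg]
          · rw [abs_of_nonneg (by omega)]
          · rw [abs_of_nonpos (by omega)]; omega
          · rw [abs_of_nonpos (by omega)]; omega
  intro k
  exact H (n + 1) k (by have := abs_nonneg k; push_cast; omega)

end Aux

/-- the monodromy filtration of a nilpotent endomorphism is unique. -/
theorem monodromy_filtration_unique {K V : Type*} [Field K] [AddCommGroup V] [Module K V]
    [FiniteDimensional K V] (N : V →ₗ[K] V) (hN : IsNilpotent N)
    (W W' : ℤ → Submodule K V)
    (hW : IsMonodromyFiltration N W) (hW' : IsMonodromyFiltration N W') :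
    ∀ k : ℤ, W k = W' k := by
  obtain ⟨n, hn⟩ := hN
  intro k
  exact le_antisymm (le_all hW hW' hn k) (le_all hW' hW hn k)
end

section
/- Let V, V' be finite-dimensional vector spaces with nilpotent endomorphisms N, N', and let f : V → V' be a linear map with f ∘ N = N' ∘ f. Then f maps the monodromy filtration of N into that of N': f(W_k(N)) ⊆ W_k(N') for all k. -/
open Submodule

/-- Iterated version of `mapN`: `N^m` maps `W k` into `W (k - 2m)`. -/
lemma IsMonodromyFiltration.pow_mem {K V : Type*} [Field K] [AddCommGroup V] [Module K V]
    {N : V →ₗ[K] V} {W : ℤ → Submodule K V} (hW : IsMonodromyFiltration N W)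
    (m : ℕ) (k : ℤ) {x : V} (hx : x ∈ W k) : (N ^ m) x ∈ W (k - 2 * m) := by
  induction m with
  | zero => simpa using hx
  | succ m ih =>
    have h2 : N ((N ^ m) x) ∈ W (k - 2 * m - 2) :=
      hW.mapN (k - 2 * m) (Submodule.mem_map_of_mem ih)
    have hpow : (N ^ (m + 1)) x = N ((N ^ m) x) := by
      rw [pow_succ']; rfl
    have e : k - 2 * (m : ℤ) - 2 = k - 2 * ((m : ℤ) + 1) := by ring
    rw [hpow]
    have e2 : ((m + 1 : ℕ) : ℤ) = (m : ℤ) + 1 := by push_cast; ring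
    rw [e2, ← e]
    exact h2

/-- a linear map commuting with the nilpotent endomorphisms maps the
monodromy filtration of `N` into that of `N'`. -/
theorem monodromy_filtration_functorial {K V V' : Type*} [Field K]
    [AddCommGroup V] [Module K V] [AddCommGroup V'] [Module K V']
    [FiniteDimensional K V] [FiniteDimensional K V']
    (N : V →ₗ[K] V) (N' : V' →ₗ[K] V') (hN : IsNilpotent N) (hN' : IsNilpotent N')
    (f : V →ₗ[K] V') (hf : f ∘ₗ N = N' ∘ₗ f)
    (W : ℤ → Submodule K V) (W' : ℤ → Submodule K V')
    (hW : IsMonodromyFiltration N W) (hW' : IsMonodromyFiltration N' W') :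
    ∀ k : ℤ, (W k).map f ≤ W' k := by
  obtain ⟨a', ha'⟩ := hW'.exhaustive
  obtain ⟨b, hb⟩ := hW.separated
  have hcomm : ∀ x, f (N x) = N' (f x) := fun x => LinearMap.congr_fun hf x
  have hcommpow : ∀ (m : ℕ) (x : V), f ((N ^ m) x) = (N' ^ m) (f x) := by
    intro m
    induction m with
    | zero => intro x; simp
    | succ m ih =>
      intro x
      rw [pow_succ, pow_succ]
      simp only [Module.End.mul_apply]
      rw [ih, hcomm]
  set M : ℤ := max 0 (max a' (-b - 1)) with hMdef
  have hM0 : 0 ≤ M := le_max_left _ _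
  have hMa' : a' ≤ M := le_trans (le_max_left _ _) (le_max_right _ _)
  have hMb : -M - 1 ≤ b := by
    have := le_trans (le_max_right a' (-b - 1)) (le_max_right 0 (max a' (-b - 1)))
    omega
  have key : ∀ n : ℤ, n ≤ M → 0 ≤ n →
      ((W n).map f ≤ W' n) ∧ ((W (-n - 1)).map f ≤ W' (-n - 1)) := by
    have main := Int.le_induction_down
      (motive := fun n _ => 0 ≤ n → ((W n).map f ≤ W' n) ∧ ((W (-n - 1)).map f ≤ W' (-n - 1)))
      (m := M) ?_ ?_
    · exact fun n hn h0 => main n hn h0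
    · -- base case n = M
      intro _
      constructor
      · have hT : W' M = ⊤ := eq_top_iff.mpr (ha' ▸ hW'.mono hMa')
        rw [hT]; exact le_top
      · have hB : W (-M - 1) = ⊥ := le_bot_iff.mp (hb ▸ hW.mono hMb)
        rw [hB]
        simp
    · -- downward step
      intro n _ ih h0'
      have hn : 0 ≤ n := by omega
      obtain ⟨pos, neg⟩ := ih hn
      constructor
      · -- positive part at n - 1
        rintro _ ⟨x, hx, rfl⟩
        have hx' : x ∈ W n := hW.mono (by omega) hx
        have hfx : f x ∈ W' n := pos (Submodule.mem_map_of_mem hx')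
        have hNx : (N ^ n.toNat) x ∈ W (-n - 1) := by
          have h := hW.pow_mem n.toNat (n - 1) hx
          have e : n - 1 - 2 * (n.toNat : ℤ) = -n - 1 := by omega
          rwa [e] at h
        have hfNx : (N' ^ n.toNat) (f x) ∈ W' (-n - 1) := by
          rw [← hcommpow]
          exact neg (Submodule.mem_map_of_mem hNx)
        exact hW'.grInj n hn (f x) hfx hfNx
      · -- negative part at n - 1 : target is W (-n)
        have e : -(n - 1) - 1 = -n := by ring
        rw [e]
        rintro _ ⟨x, hx, rfl⟩
        have hsup : x ∈ (W n).map (N ^ n.toNat) ⊔ W (-n - 1) := hW.grSurj n hn hx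
        rw [Submodule.mem_sup] at hsup
        obtain ⟨y, hy, z, hz, rfl⟩ := hsup
        obtain ⟨u, hu, rfl⟩ := hy
        rw [map_add]
        have h1 : f ((N ^ n.toNat) u) ∈ W' (-n) := by
          rw [hcommpow]
          have hfu : f u ∈ W' n := pos (Submodule.mem_map_of_mem hu)
          have h := hW'.pow_mem n.toNat n hfu
          have e2 : n - 2 * (n.toNat : ℤ) = -n := by omega
          rwa [e2] at h
        have h2 : f z ∈ W' (-n) :=
          hW'.mono (by omega) (neg (Submodule.mem_map_of_mem hz))
        exact add_mem h1 h2
  intro k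
  rcases le_or_gt 0 k with hk0 | hk0
  · rcases le_or_gt k M with hkM | hkM
    · exact (key k hkM hk0).1
    · have hT : W' k = ⊤ := eq_top_iff.mpr (ha' ▸ hW'.mono (by omega : a' ≤ k))
      rw [hT]; exact le_top
  · set m : ℤ := -k - 1 with hm
    have hm0 : 0 ≤ m := by omega
    rcases le_or_gt m M with hmM | hmM
    · have h := (key m hmM hm0).2
      have e : -m - 1 = k := by omega
      rwa [e] at h
    · have hB : W k = ⊥ := le_bot_iff.mp (hb ▸ hW.mono (by omega : k ≤ b))
      rw [hB]
      simp
end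

section
/- Let N be a nilpotent endomorphism of a finite-dimensional vector space V over a field, and let N^T : V* → V* be its transpose on the dual space. Then the monodromy filtration of N^T centered at 0 is given by W_k(N^T) = (W_{-k-1}(N))^⊥, the annihilator in V* of W_{-k-1}(N). -/
open Submodule

/-- Factoring a functional through a linear map whose kernel it kills. -/
lemma exists_factor_through {K V₁ V₂ : Type*} [Field K] [AddCommGroup V₁] [Module K V₁]
    [AddCommGroup V₂] [Module K V₂] (f : V₁ →ₗ[K] V₂) (g : V₁ →ₗ[K] K)
    (h : LinearMap.ker f ≤ LinearMap.ker g) : ∃ ψ : V₂ →ₗ[K] K, ∀ x, ψ (f x) = g x := by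
  obtain ⟨ψ, hψ⟩ := LinearMap.exists_extend
    (((LinearMap.ker f).liftQ g h).comp f.quotKerEquivRange.symm.toLinearMap)
  refine ⟨ψ, fun x => ?_⟩
  have h1 : (⟨f x, LinearMap.mem_range_self f x⟩ : LinearMap.range f)
      = f.quotKerEquivRange (Submodule.Quotient.mk x) := rfl
  calc ψ (f x) = ψ ((LinearMap.range f).subtype ⟨f x, LinearMap.mem_range_self f x⟩) := rfl
    _ = ((LinearMap.ker f).liftQ g h) (f.quotKerEquivRange.symm
          ⟨f x, LinearMap.mem_range_self f x⟩) := by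
        rw [← LinearMap.comp_apply, hψ]; rfl
    _ = g x := by rw [h1, LinearEquiv.symm_apply_apply]; rfl

lemma dualMap_pow {K V : Type*} [Field K] [AddCommGroup V] [Module K V]
    (N : V →ₗ[K] V) (n : ℕ) : (N.dualMap) ^ n = (N ^ n).dualMap := by
  induction n with
  | zero => rfl
  | succ n ih =>
      rw [pow_succ, ih, pow_succ']
      rfl

/-- the monodromy filtration of the transpose `N^T` on the dual space is
given by the annihilators `W_k(N^T) = (W_{-k-1}(N))^⊥`. -/
theorem monodromy_filtration_dual {K V : Type*} [Field K] [AddCommGroup V] [Module K V]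
    [FiniteDimensional K V] (N : V →ₗ[K] V) (hN : IsNilpotent N)
    (W : ℤ → Submodule K V) (hW : IsMonodromyFiltration N W) :
    IsMonodromyFiltration (N.dualMap) (fun k : ℤ => (W (-k - 1)).dualAnnihilator) := by
  constructor
  · intro a b hab
    exact Submodule.dualAnnihilator_anti (hW.mono (by omega))
  · obtain ⟨b, hb⟩ := hW.separated
    exact ⟨-b - 1, by simp only [show -(-b - 1) - 1 = b by omega, hb,
      Submodule.dualAnnihilator_bot]⟩
  · obtain ⟨a, ha⟩ := hW.exhaustive
    exact ⟨-a - 1, by simp only [show -(-a - 1) - 1 = a by omega, ha,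
      Submodule.dualAnnihilator_top]⟩
  · intro k φ hφ
    simp only [Submodule.mem_map] at hφ
    obtain ⟨χ, hχ, rfl⟩ := hφ
    rw [Submodule.mem_dualAnnihilator] at hχ ⊢
    intro w hw
    have h2 := hW.mapN (-(k - 2) - 1) (Submodule.mem_map_of_mem hw)
    rw [show (-(k - 2) - 1 - 2 : ℤ) = -k - 1 by ring] at h2
    exact hχ (N w) h2
  · intro k hk φ hφ hφ2
    simp only [Submodule.mem_dualAnnihilator] at hφ hφ2 ⊢
    rw [dualMap_pow] at hφ2
    intro w hw
    have hw0 : w ∈ W (-k) := by rwa [show (-(k - 1) - 1 : ℤ) = -k by ring] at hw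
    obtain ⟨y, hy, z, hz, rfl⟩ := Submodule.mem_sup.mp (hW.grSurj k hk hw0)
    obtain ⟨x, hx, rfl⟩ := hy
    have h1 : ((N ^ k.toNat).dualMap φ) x = 0 :=
      hφ2 x (by rw [show (-(-k - 1) - 1 : ℤ) = k by ring]; exact hx)
    rw [map_add, hφ z hz, add_zero]
    simpa using h1
  · intro k hk φ hφ
    rw [show (- -k - 1 : ℤ) = k - 1 by ring] at hφ
    rw [Submodule.mem_dualAnnihilator] at hφ
    -- build ψ on V vanishing on W(-k-1) with ψ (N^k x) = φ x for x ∈ W k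
    set n := k.toNat
    set Q := V ⧸ W (-k - 1)
    set f : (W k) →ₗ[K] Q := (W (-k - 1)).mkQ.comp ((N ^ n).comp (W k).subtype) with hf
    set g : (W k) →ₗ[K] K := φ.comp (W k).subtype with hg
    have hker : LinearMap.ker f ≤ LinearMap.ker g := by
      intro x hx
      simp only [LinearMap.mem_ker, hf, LinearMap.comp_apply, Submodule.mkQ_apply,
        Submodule.coe_subtype] at hx
      have hx' : (N ^ k.toNat) x.1 ∈ W (-k - 1) := (Submodule.Quotient.mk_eq_zero _).mp hx
      have := hW.grInj k hk x.1 x.2 hx' 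
      simpa [hg] using hφ x.1 this
    obtain ⟨ψ', hψ'⟩ := exists_factor_through f g hker
    set ψ : Module.Dual K V := ψ'.comp (W (-k - 1)).mkQ with hψ
    have hψmem : ψ ∈ (W (-k - 1)).dualAnnihilator := by
      rw [Submodule.mem_dualAnnihilator]
      intro w hw
      have h0 : (W (-k - 1)).mkQ w = 0 := (Submodule.Quotient.mk_eq_zero _).mpr hw
      simp only [hψ, LinearMap.comp_apply]
      rw [h0, map_zero]
    have hψN : ∀ x ∈ W k, ψ ((N ^ n) x) = φ x := by
      intro x hx
      have := hψ' ⟨x, hx⟩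
      simp [hψ, hf, hg] at this; exact this
    rw [Submodule.mem_sup]
    refine ⟨(N.dualMap ^ n) ψ, Submodule.mem_map_of_mem hψmem, φ - (N.dualMap ^ n) ψ, ?_, by abel⟩
    rw [Submodule.mem_dualAnnihilator]
    intro w hw
    have hw' : w ∈ W k := by simpa [show -(-k - 1) - 1 = k by omega] using hw
    simp [dualMap_pow, hψN w hw']
end

section
/- Let V be a finite-dimensional vector space with a finite increasing filtration L_• and a nilpotent endomorphism N satisfying N(L_k) ⊆ L_k for all k. If W_• and W'_• are both relative monodromy filtrations of N with respect to L, then W_k = W'_k for all k. That is, the relative monodromy filtration is unique if it exists. -/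
open Submodule

/-- `W` is a relative monodromy filtration of `N` with respect to `L`:
`N (W k) ⊆ W (k-2)` and, for every `l` and every `k ≥ 0`, the map induced by `N^k`
is an isomorphism `Gr^W_{l+k} Gr^L_l V ≅ Gr^W_{l-k} Gr^L_l V`, where the double graded
piece `Gr^W_m Gr^L_l V` is `(W m ⊓ L l + L (l-1)) / (W (m-1) ⊓ L l + L (l-1))`;
injectivity `grInj` and surjectivity `grSurj` are stated at the level of submodules. -/
structure IsRelMonodromyFiltration {K V : Type*} [Field K] [AddCommGroup V] [Module K V]
    (N : V →ₗ[K] V) (L : ℤ → Submodule K V) (W : ℤ → Submodule K V) : Prop where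
  mono : Monotone W
  exhaustive : ∃ a : ℤ, W a = ⊤
  separated : ∃ b : ℤ, W b = ⊥
  mapN : ∀ k : ℤ, (W k).map N ≤ W (k - 2)
  grInj : ∀ l k : ℤ, 0 ≤ k → ∀ x ∈ W (l + k) ⊓ L l,
    (N ^ k.toNat) x ∈ (W (l - k - 1) ⊓ L l) ⊔ L (l - 1) →
      x ∈ (W (l + k - 1) ⊓ L l) ⊔ L (l - 1)
  grSurj : ∀ l k : ℤ, 0 ≤ k →
    W (l - k) ⊓ L l ≤ ((W (l + k) ⊓ L l).map (N ^ k.toNat) ⊔ (W (l - k - 1) ⊓ L l)) ⊔ L (l - 1)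

section AuxLemmas

variable {K V : Type*} [Field K] [AddCommGroup V] [Module K V]

private lemma mem_of_eqIdx (f : ℤ → Submodule K V) {a b : ℤ} (h : a = b) {x : V}
    (hx : x ∈ f a) : x ∈ f b := h ▸ hx

private lemma pow_mem_W {N : V →ₗ[K] V} {W : ℤ → Submodule K V}
    (hmapN : ∀ k : ℤ, (W k).map N ≤ W (k - 2)) :
    ∀ (p : ℕ) (k : ℤ) (x : V), x ∈ W k → (N ^ p) x ∈ W (k - 2 * p) := by
  intro p
  induction p with
  | zero => intro k x hx; simpa using hx
  | succ p ih =>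
    intro k x hx
    have h1 : N x ∈ W (k - 2) := hmapN k ⟨x, hx, rfl⟩
    have h2 := ih (k - 2) (N x) h1
    have h3 : (N ^ (p + 1)) x = (N ^ p) (N x) := by
      rw [pow_succ]; rfl
    rw [h3]
    exact mem_of_eqIdx W (by push_cast; ring) h2

private lemma pow_mem_L {N : V →ₗ[K] V} {L : ℤ → Submodule K V}
    (hNL : ∀ l : ℤ, (L l).map N ≤ L l) :
    ∀ (p : ℕ) (l : ℤ) (x : V), x ∈ L l → (N ^ p) x ∈ L l := by
  intro p
  induction p with
  | zero => intro l x hx; simpa using hx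
  | succ p ih =>
    intro l x hx
    have h1 : N x ∈ L l := hNL l ⟨x, hx, rfl⟩
    have h3 : (N ^ (p + 1)) x = (N ^ p) (N x) := by
      rw [pow_succ]; rfl
    rw [h3]
    exact ih l (N x) h1

/-- Key lemma A: for a relative monodromy filtration, if `x ∈ L l` and
`N^(j+1) x ∈ W (l - j - 2)` then `x ∈ W (l + j)`. -/
private lemma lemA {N : V →ₗ[K] V} {L W : ℤ → Submodule K V}
    (hWmono : Monotone W) (hWex : ∃ a : ℤ, W a = ⊤)
    (hWmapN : ∀ k : ℤ, (W k).map N ≤ W (k - 2))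
    (hgrInj : ∀ l k : ℤ, 0 ≤ k → ∀ x ∈ W (l + k) ⊓ L l,
      (N ^ k.toNat) x ∈ (W (l - k - 1) ⊓ L l) ⊔ L (l - 1) →
        x ∈ (W (l + k - 1) ⊓ L l) ⊔ L (l - 1))
    (hLmono : Monotone L) (hLsep : ∃ b : ℤ, L b = ⊥)
    (hNL : ∀ l : ℤ, (L l).map N ≤ L l)
    (l : ℤ) (j : ℕ) (x : V) (hx : x ∈ L l)
    (hNx : (N ^ (j + 1)) x ∈ W (l - j - 2)) : x ∈ W (l + j) := by
  obtain ⟨bL, hbL⟩ := hLsep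
  obtain ⟨aW, haW⟩ := hWex
  have aux : ∀ n : ℕ, ∀ x : V, x ∈ L l → (N ^ (j + 1)) x ∈ W (l - j - 2) →
      x ∈ W (l + j + n) → x ∈ W (l + j) := by
    intro n
    induction n with
    | zero => intro x hx hNx hxW; simpa using hxW
    | succ n ih =>
      intro x hx hNx hxW
      -- set s := l + j + n + 1
      have inner : ∀ d t : ℕ, (l - bL).toNat ≤ t + d → ∀ w v : V,
          w ∈ W (l + j + n) → v ∈ W (l + j + n + 1) → v ∈ L (l - t) →
          x = w + v → x ∈ W (l + j) := by
        intro d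
        induction d with
        | zero =>
          intro t ht w v hw hv hvL hxe
          have hvbot : v ∈ (⊥ : Submodule K V) := by
            rw [← hbL]
            exact hLmono (show l - (t : ℤ) ≤ bL by omega) hvL
          rw [Submodule.mem_bot] at hvbot
          subst hvbot
          rw [add_zero] at hxe
          exact ih x hx hNx (by rw [hxe]; exact hw)
        | succ d ihd =>
          intro t ht w v hw hv hvL hxe
          have hvsub : v = x - w := by rw [hxe]; abel
          -- N^(j+1) v ∈ W (l + j + n + 1 - 2*(j+1) - 1)
          have hNpx : (N ^ (j + 1)) x ∈ W (l + j + n + 1 - 2 * ((j : ℤ) + 1) - 1) :=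
            hWmono (by omega) hNx
          have hNpw : (N ^ (j + 1)) w ∈ W (l + j + n + 1 - 2 * ((j : ℤ) + 1) - 1) := by
            have := pow_mem_W hWmapN (j + 1) (l + j + n) w hw
            exact mem_of_eqIdx W (by push_cast; ring) this
          have hNpv : (N ^ (j + 1)) v ∈ W (l + j + n + 1 - 2 * ((j : ℤ) + 1) - 1) := by
            rw [hvsub, map_sub]
            exact sub_mem hNpx hNpw
          -- N^(j+n+1+t) v ∈ W ((l - t) - (j+n+1+t) - 1)
          have hpow : (N ^ (j + n + 1 + t)) v = (N ^ (n + t)) ((N ^ (j + 1)) v) := by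
            rw [show j + n + 1 + t = (n + t) + (j + 1) by ring, pow_add]; rfl
          have hNiv : (N ^ (j + n + 1 + t)) v ∈
              W (l - (t : ℤ) - ((j + n + 1 + t : ℕ) : ℤ) - 1) := by
            rw [hpow]
            have := pow_mem_W hWmapN (n + t) _ _ hNpv
            exact mem_of_eqIdx W (by push_cast; ring) this
          have hNivL : (N ^ (j + n + 1 + t)) v ∈ L (l - t) :=
            pow_mem_L hNL _ _ _ hvL
          have hvW : v ∈ W (l - (t : ℤ) + ((j + n + 1 + t : ℕ) : ℤ)) :=
            mem_of_eqIdx W (by push_cast; ring) hv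
          have hconc := hgrInj (l - t) ((j + n + 1 + t : ℕ) : ℤ)
            (by positivity) v ⟨hvW, hvL⟩ ?_
          · rcases Submodule.mem_sup.mp hconc with ⟨v₁, hv₁, z, hz, hsum⟩
            have hv₁W : v₁ ∈ W (l + j + n) :=
              mem_of_eqIdx W (by push_cast; ring) hv₁.1
            have hzW : z ∈ W (l + j + n + 1) := by
              have : z = v - v₁ := by rw [← hsum]; abel
              rw [this]
              exact sub_mem hv (hWmono (by omega) hv₁W)
            have hzL : z ∈ L (l - ((t + 1 : ℕ) : ℤ)) :=
              mem_of_eqIdx L (by push_cast; ring) hz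
            have hxe' : x = (w + v₁) + z := by
              rw [hxe, ← hsum]; abel
            exact ihd (t + 1) (by omega) (w + v₁) z (add_mem hw hv₁W) hzW hzL hxe'
          · rw [Int.toNat_natCast]
            exact Submodule.mem_sup_left ⟨hNiv, hNivL⟩
      have hxW' : x ∈ W (l + j + n + 1) := mem_of_eqIdx W (by push_cast; ring) hxW
      have hxL0 : x ∈ L (l - ((0 : ℕ) : ℤ)) := mem_of_eqIdx L (by push_cast; ring) hx
      exact inner ((l - bL).toNat) 0 (by omega) 0 x (zero_mem _) hxW' hxL0 (by rw [zero_add])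
  have hxtop : x ∈ W (l + j + ((aW - (l + j)).toNat : ℤ)) := by
    have : x ∈ W aW := by rw [haW]; trivial
    exact hWmono (by omega) this
  exact aux ((aW - (l + j)).toNat) x hx hNx hxtop


/-- Key lemma B: strict form of graded surjectivity:
`W (l-j-1) ⊓ L l ≤ N^(j+1)(W (l+j+1) ⊓ L l) + (W (l-j-1) ⊓ L (l-1))`. -/
private lemma lemB {N : V →ₗ[K] V} {L W : ℤ → Submodule K V}
    (hWmono : Monotone W) (hWsep : ∃ b : ℤ, W b = ⊥)
    (hWmapN : ∀ k : ℤ, (W k).map N ≤ W (k - 2))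
    (hgrSurj : ∀ l k : ℤ, 0 ≤ k →
      W (l - k) ⊓ L l ≤ ((W (l + k) ⊓ L l).map (N ^ k.toNat) ⊔ (W (l - k - 1) ⊓ L l)) ⊔ L (l - 1))
    (hNL : ∀ l : ℤ, (L l).map N ≤ L l)
    (l : ℤ) (j : ℕ) :
    W (l - j - 1) ⊓ L l ≤
      (W (l + j + 1) ⊓ L l).map (N ^ (j + 1)) ⊔ (W (l - j - 1) ⊓ L (l - 1)) := by
  obtain ⟨bW, hbW⟩ := hWsep
  have aux : ∀ d : ℕ, ∀ j : ℕ, (l - 1 - bW).toNat ≤ j + d →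
      W (l - j - 1) ⊓ L l ≤
        (W (l + j + 1) ⊓ L l).map (N ^ (j + 1)) ⊔ (W (l - j - 1) ⊓ L (l - 1)) := by
    intro d
    induction d with
    | zero =>
      intro j hj x hx
      have : x ∈ (⊥ : Submodule K V) := by
        rw [← hbW]
        exact hWmono (show l - (j : ℤ) - 1 ≤ bW by omega) hx.1
      rw [Submodule.mem_bot] at this
      rw [this]
      exact zero_mem _
    | succ d ihd =>
      intro j hj x hx
      have hsurj := hgrSurj l ((j : ℤ) + 1) (by positivity)
      have hx' : x ∈ W (l - ((j : ℤ) + 1)) ⊓ L l :=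
        ⟨mem_of_eqIdx W (by ring) hx.1, hx.2⟩
      have hmem := hsurj hx'
      rw [show ((j : ℤ) + 1).toNat = j + 1 by omega] at hmem
      -- hmem : x ∈ ((W (l + (j+1)) ⊓ L l).map (N ^ (j+1)) ⊔ (W (l - (j+1) - 1) ⊓ L l)) ⊔ L (l-1)
      rcases Submodule.mem_sup.mp hmem with ⟨y, hy, c, hc, hsum⟩
      rcases Submodule.mem_sup.mp hy with ⟨a, ha, b, hb, hsum2⟩
      rcases Submodule.mem_map.mp ha with ⟨u, hu, hau⟩
      -- a = N^(j+1) u, u ∈ W (l + (j+1)) ⊓ L l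
      have haW : a ∈ W (l - j - 1) := by
        rw [← hau]
        have := pow_mem_W hWmapN (j + 1) (l + ((j : ℤ) + 1)) u hu.1
        exact mem_of_eqIdx W (by push_cast; ring) this
      -- b ∈ W (l - (j+1) - 1) ⊓ L l : apply ihd at j+1
      have hb' : b ∈ W (l - ((j + 1 : ℕ) : ℤ) - 1) ⊓ L l :=
        ⟨mem_of_eqIdx W (by push_cast; ring) hb.1, hb.2⟩
      have hbrec := ihd (j + 1) (by omega) hb'
      rcases Submodule.mem_sup.mp hbrec with ⟨b₁, hb₁, b₂, hb₂, hsum3⟩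
      rcases Submodule.mem_map.mp hb₁ with ⟨u₂, hu₂, hbu₂⟩
      -- b₁ = N^(j+2) u₂ = N^(j+1) (N u₂), with N u₂ ∈ W (l+j) ⊓ L l ≤ W (l+j+1) ⊓ L l
      have hNu₂W : N u₂ ∈ W (l + j + 1) := by
        have : N u₂ ∈ W (l + ((j + 1 : ℕ) : ℤ) + 1 - 2) := hWmapN _ ⟨u₂, hu₂.1, rfl⟩
        exact hWmono (by push_cast; omega) this
      have hNu₂L : N u₂ ∈ L l := hNL l ⟨u₂, hu₂.2, rfl⟩
      have hb₁' : b₁ ∈ (W (l + j + 1) ⊓ L l).map (N ^ (j + 1)) := by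
        refine ⟨N u₂, ⟨hNu₂W, hNu₂L⟩, ?_⟩
        rw [← hbu₂, show (j : ℕ) + 1 + 1 = (j + 1) + 1 by ring, pow_succ]
        rfl
      -- c ∈ L (l-1), and c = x - y ∈ W (l - j - 1)
      have hcW : c ∈ W (l - j - 1) := by
        have hcx : c = x - a - b := by rw [← hsum, ← hsum2]; abel
        rw [hcx]
        exact sub_mem (sub_mem hx.1 haW) (hWmono (by omega) hb.1)
      have hb₂' : b₂ ∈ W (l - j - 1) ⊓ L (l - 1) :=
        ⟨hWmono (by omega) hb₂.1, hb₂.2⟩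
      -- x = (a + b₁) + (b₂ + c)
      have hxeq : x = (a + b₁) + (b₂ + c) := by
        rw [← hsum, ← hsum2, ← hsum3]; abel
      rw [hxeq]
      exact add_mem
        (Submodule.mem_sup_left (add_mem (Submodule.mem_map.mpr ⟨u, by
          exact ⟨⟨mem_of_eqIdx W (by push_cast; ring) hu.1, hu.2⟩, hau⟩⟩) hb₁'))
        (Submodule.mem_sup_right (add_mem hb₂' ⟨hcW, hc⟩))
  exact aux ((l - 1 - bW).toNat) j (by omega)


end AuxLemmas

/-- the relative monodromy filtration of `N` with respect to a finite
increasing filtration `L` preserved by `N` is unique if it exists. -/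
theorem rel_monodromy_filtration_unique {K V : Type*} [Field K] [AddCommGroup V] [Module K V]
    [FiniteDimensional K V] (N : V →ₗ[K] V) (hN : IsNilpotent N)
    (L : ℤ → Submodule K V) (hLmono : Monotone L)
    (hLex : ∃ a : ℤ, L a = ⊤) (hLsep : ∃ b : ℤ, L b = ⊥)
    (hNL : ∀ l : ℤ, (L l).map N ≤ L l)
    (W W' : ℤ → Submodule K V)
    (hW : IsRelMonodromyFiltration N L W) (hW' : IsRelMonodromyFiltration N L W') :
    ∀ k : ℤ, W k = W' k := by
  have hWmapN := hW.mapN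
  have hW'mapN := hW'.mapN
  have hAW : ∀ (l : ℤ) (j : ℕ) (x : V), x ∈ L l →
      (N ^ (j + 1)) x ∈ W (l - j - 2) → x ∈ W (l + j) :=
    lemA hW.mono hW.exhaustive hW.mapN hW.grInj hLmono hLsep hNL
  have hAW' : ∀ (l : ℤ) (j : ℕ) (x : V), x ∈ L l →
      (N ^ (j + 1)) x ∈ W' (l - j - 2) → x ∈ W' (l + j) :=
    lemA hW'.mono hW'.exhaustive hW'.mapN hW'.grInj hLmono hLsep hNL
  have hBW : ∀ (l : ℤ) (j : ℕ), W (l - j - 1) ⊓ L l ≤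
      (W (l + j + 1) ⊓ L l).map (N ^ (j + 1)) ⊔ (W (l - j - 1) ⊓ L (l - 1)) :=
    lemB hW.mono hW.separated hW.mapN hW.grSurj hNL
  have hBW' : ∀ (l : ℤ) (j : ℕ), W' (l - j - 1) ⊓ L l ≤
      (W' (l + j + 1) ⊓ L l).map (N ^ (j + 1)) ⊔ (W' (l - j - 1) ⊓ L (l - 1)) :=
    lemB hW'.mono hW'.separated hW'.mapN hW'.grSurj hNL
  obtain ⟨e, hNe⟩ := hN
  obtain ⟨aL, haL⟩ := hLex
  obtain ⟨bL, hbL⟩ := hLsep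
  -- the inductive step over levels of L
  have Estep : ∀ l : ℤ, (∀ k : ℤ, W k ⊓ L (l - 1) = W' k ⊓ L (l - 1)) →
      ∀ k : ℤ, W k ⊓ L l = W' k ⊓ L l := by
    intro l hE
    have hpowzero : ∀ n : ℕ, e ≤ n + 1 → (N ^ (n + 1) : V →ₗ[K] V) = 0 := by
      intro n hn
      rw [show n + 1 = (n + 1 - e) + e by omega, pow_add, hNe, mul_zero]
    -- the two-sided statement at distance n from the center l
    have descent : ∀ n : ℕ,
        (W (l + (n + 1)) ⊓ L l = W' (l + (n + 1)) ⊓ L l ∧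
         W (l - (n + 1) - 1) ⊓ L l = W' (l - (n + 1) - 1) ⊓ L l) →
        (W (l + n) ⊓ L l = W' (l + n) ⊓ L l ∧
         W (l - n - 1) ⊓ L l = W' (l - n - 1) ⊓ L l) := by
      intro n ⟨h1, h2⟩
      constructor
      · -- use lemA with j := n and h2
        apply le_antisymm
        · intro x hx
          have hp : (N ^ (n + 1)) x ∈ W (l + (n : ℤ) - 2 * ((n : ℕ) + 1 : ℕ)) :=
            pow_mem_W hWmapN (n + 1) _ x hx.1
          have hpW : (N ^ (n + 1)) x ∈ W (l - ((n : ℕ) + 1 : ℕ) - 1) :=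
            mem_of_eqIdx W (by push_cast; ring) hp
          have hpL : (N ^ (n + 1)) x ∈ L l := pow_mem_L hNL _ _ _ hx.2
          have : (N ^ (n + 1)) x ∈ W' (l - ((n : ℕ) + 1 : ℕ) - 1) ⊓ L l :=
            h2 ▸ (⟨hpW, hpL⟩ : (N ^ (n + 1)) x ∈ W (l - ((n : ℕ) + 1 : ℕ) - 1) ⊓ L l)
          have hx' : x ∈ W' (l + n) := by
            apply hAW' l n x hx.2
            exact mem_of_eqIdx W' (by push_cast; ring) this.1
          exact ⟨hx', hx.2⟩
        · intro x hx
          have hp : (N ^ (n + 1)) x ∈ W' (l + (n : ℤ) - 2 * ((n : ℕ) + 1 : ℕ)) :=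
            pow_mem_W hW'mapN (n + 1) _ x hx.1
          have hpW : (N ^ (n + 1)) x ∈ W' (l - ((n : ℕ) + 1 : ℕ) - 1) :=
            mem_of_eqIdx W' (by push_cast; ring) hp
          have hpL : (N ^ (n + 1)) x ∈ L l := pow_mem_L hNL _ _ _ hx.2
          have : (N ^ (n + 1)) x ∈ W (l - ((n : ℕ) + 1 : ℕ) - 1) ⊓ L l :=
            h2 ▸ (⟨hpW, hpL⟩ : (N ^ (n + 1)) x ∈ W' (l - ((n : ℕ) + 1 : ℕ) - 1) ⊓ L l)
          have hx' : x ∈ W (l + n) := by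
            apply hAW l n x hx.2
            exact mem_of_eqIdx W (by push_cast; ring) this.1
          exact ⟨hx', hx.2⟩
      · -- use lemB with j := n, h1 and hE
        apply le_antisymm
        · intro x hx
          have hm := hBW l n hx
          rcases Submodule.mem_sup.mp hm with ⟨y, hy, z, hz, hsum⟩
          rcases Submodule.mem_map.mp hy with ⟨u, hu, huy⟩
          have hu' : u ∈ W' (l + n + 1) ⊓ L l := by
            have : u ∈ W (l + ((n : ℕ) + 1 : ℕ)) ⊓ L l :=
              ⟨mem_of_eqIdx W (by push_cast; ring) hu.1, hu.2⟩
            have := h1 ▸ this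
            exact ⟨mem_of_eqIdx W' (by push_cast; ring) this.1, this.2⟩
          have hyW' : y ∈ W' (l - n - 1) := by
            rw [← huy]
            have := pow_mem_W hW'mapN (n + 1) (l + n + 1) u hu'.1
            exact mem_of_eqIdx W' (by push_cast; ring) this
          have hyL : y ∈ L l := by
            rw [← huy]; exact pow_mem_L hNL _ _ _ hu'.2
          have hz' : z ∈ W' (l - n - 1) ⊓ L l := by
            have := hE (l - n - 1) ▸ hz
            exact ⟨this.1, hLmono (by omega) this.2⟩
          rw [← hsum]
          exact add_mem (⟨hyW', hyL⟩ : y ∈ W' (l - n - 1) ⊓ L l) hz'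
        · intro x hx
          have hm := hBW' l n hx
          rcases Submodule.mem_sup.mp hm with ⟨y, hy, z, hz, hsum⟩
          rcases Submodule.mem_map.mp hy with ⟨u, hu, huy⟩
          have hu' : u ∈ W (l + n + 1) ⊓ L l := by
            have : u ∈ W' (l + ((n : ℕ) + 1 : ℕ)) ⊓ L l :=
              ⟨mem_of_eqIdx W' (by push_cast; ring) hu.1, hu.2⟩
            have := h1 ▸ this
            exact ⟨mem_of_eqIdx W (by push_cast; ring) this.1, this.2⟩
          have hyW : y ∈ W (l - n - 1) := by
            rw [← huy]
            have := pow_mem_W hWmapN (n + 1) (l + n + 1) u hu'.1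
            exact mem_of_eqIdx W (by push_cast; ring) this
          have hyL : y ∈ L l := by
            rw [← huy]; exact pow_mem_L hNL _ _ _ hu'.2
          have hz' : z ∈ W (l - n - 1) ⊓ L l := by
            have := (hE (l - n - 1)).symm ▸ hz
            exact ⟨this.1, hLmono (by omega) this.2⟩
          rw [← hsum]
          exact add_mem (⟨hyW, hyL⟩ : y ∈ W (l - n - 1) ⊓ L l) hz'
    -- base case at distance n ≥ e
    have base : ∀ n : ℕ, e ≤ n →
        (W (l + n) ⊓ L l = W' (l + n) ⊓ L l ∧
         W (l - n - 1) ⊓ L l = W' (l - n - 1) ⊓ L l) := by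
      intro n hn
      have hz : (N ^ (n + 1) : V →ₗ[K] V) = 0 := hpowzero n (by omega)
      constructor
      · apply le_antisymm
        · intro x hx
          refine ⟨hAW' l n x hx.2 ?_, hx.2⟩
          rw [hz]; exact zero_mem _
        · intro x hx
          refine ⟨hAW l n x hx.2 ?_, hx.2⟩
          rw [hz]; exact zero_mem _
      · -- both sides shrink into L (l-1)
        have shrink : ∀ (W₀ : ℤ → Submodule K V),
            (∀ (l : ℤ) (j : ℕ), W₀ (l - j - 1) ⊓ L l ≤
              (W₀ (l + j + 1) ⊓ L l).map (N ^ (j + 1)) ⊔ (W₀ (l - j - 1) ⊓ L (l - 1))) →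
            W₀ (l - n - 1) ⊓ L l ≤ W₀ (l - n - 1) ⊓ L (l - 1) := by
          intro W₀ hB x hx
          have hm := hB l n hx
          rcases Submodule.mem_sup.mp hm with ⟨y, hy, z, hz', hsum⟩
          rcases Submodule.mem_map.mp hy with ⟨u, hu, huy⟩
          have : y = 0 := by rw [← huy, hz]; rfl
          rw [← hsum, this, zero_add]
          exact hz'
        apply le_antisymm
        · intro x hx
          have h1 := shrink W hBW hx
          have h2 := hE (l - n - 1) ▸ h1
          exact ⟨h2.1, hLmono (by omega) h2.2⟩
        · intro x hx
          have h1 := shrink W' hBW' hx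
          have h2 := (hE (l - n - 1)).symm ▸ h1
          exact ⟨h2.1, hLmono (by omega) h2.2⟩
    -- combine: all distances
    have Kall : ∀ n : ℕ,
        (W (l + n) ⊓ L l = W' (l + n) ⊓ L l ∧
         W (l - n - 1) ⊓ L l = W' (l - n - 1) ⊓ L l) := by
      have haux : ∀ d n : ℕ, e ≤ n + d →
          (W (l + n) ⊓ L l = W' (l + n) ⊓ L l ∧
           W (l - n - 1) ⊓ L l = W' (l - n - 1) ⊓ L l) := by
        intro d
        induction d with
        | zero => intro n hn; exact base n (by omega)
        | succ d ihd => intro n hn; exact descent n (ihd (n + 1) (by omega))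
      intro n
      exact haux e n (by omega)
    intro k
    rcases le_or_gt l k with hk | hk
    · have h := (Kall (k - l).toNat).1
      have hidx : l + ((k - l).toNat : ℤ) = k := by omega
      rw [hidx] at h
      exact h
    · have h := (Kall (l - k - 1).toNat).2
      have hidx : l - ((l - k - 1).toNat : ℤ) - 1 = k := by omega
      rw [hidx] at h
      exact h
  -- upward induction over levels of L
  have Eall : ∀ n : ℕ, ∀ k : ℤ, W k ⊓ L (bL + n) = W' k ⊓ L (bL + n) := by
    intro n
    induction n with
    | zero =>
      intro k
      simp only [Nat.cast_zero, add_zero, hbL, inf_bot_eq]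
    | succ n ih =>
      have := Estep (bL + n + 1) (by
        intro k
        have hidx : bL + (n : ℤ) + 1 - 1 = bL + n := by ring
        rw [hidx]
        exact ih k)
      intro k
      have hidx : bL + ((n : ℕ) + 1 : ℕ) = bL + (n : ℤ) + 1 := by push_cast; ring
      rw [hidx]
      exact this k
  intro k
  have hltop : L (bL + ((aL - bL).toNat : ℤ)) = ⊤ := by
    apply top_le_iff.mp
    rw [← haL]
    exact hLmono (by omega)
  have h := Eall (aL - bL).toNat k
  rw [hltop, inf_top_eq, inf_top_eq] at h
  exact h
end

section
/- Let M be a module over a ring and let A_1 ⊆ A_2 ⊆ … ⊆ A_m and B_1 ⊆ B_2 ⊆ … ⊆ B_n be two chains of submodules of M. Then the sublattice of the lattice of submodules of M generated by {A_1,…,A_m, B_1,…,B_n} is distributive. In particular, for any i, j, k one has A_i ∩ (B_j + B_k ∩ A_l) = A_i ∩ B_j + A_i ∩ B_k ∩ A_l, and any two filtrations on a module are compatible. -/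
open Multiset

section Modular

set_option linter.unusedSectionVars false

variable {L : Type*} [Lattice L] [IsModularLattice L] [OrderBot L]

/-- Sup of basic elements `p.1 ⊓ p.2`. -/
def msup (s : Multiset (L × L)) : L := (s.map fun p => p.1 ⊓ p.2).sup

/-- Pairwise meets. -/
def pw (s t : Multiset (L × L)) : Multiset (L × L) :=
  s.bind fun p => t.map fun q => (p.1 ⊓ q.1, p.2 ⊓ q.2)

@[simp] lemma msup_zero : msup (0 : Multiset (L × L)) = ⊥ := rfl

@[simp] lemma msup_cons (p : L × L) (s : Multiset (L × L)) :
    msup (p ::ₘ s) = p.1 ⊓ p.2 ⊔ msup s := by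
  simp [msup]

@[simp] lemma msup_add (s t : Multiset (L × L)) : msup (s + t) = msup s ⊔ msup t := by
  simp [msup, Multiset.sup_add]

lemma le_msup {p : L × L} {s : Multiset (L × L)} (h : p ∈ s) : p.1 ⊓ p.2 ≤ msup s :=
  Multiset.le_sup (mem_map_of_mem _ h)

lemma msup_le {s : Multiset (L × L)} {x : L} (h : ∀ p ∈ s, p.1 ⊓ p.2 ≤ x) : msup s ≤ x :=
  Multiset.sup_le.mpr (by rintro y hy; rcases mem_map.mp hy with ⟨p, hp, rfl⟩; exact h p hp)

lemma mem_pw {r : L × L} {s t : Multiset (L × L)} :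
    r ∈ pw s t ↔ ∃ p ∈ s, ∃ q ∈ t, r = (p.1 ⊓ q.1, p.2 ⊓ q.2) := by
  simp only [pw, Multiset.mem_bind, Multiset.mem_map]
  constructor
  · rintro ⟨p, hp, q, hq, rfl⟩; exact ⟨p, hp, q, hq, rfl⟩
  · rintro ⟨p, hp, q, hq, rfl⟩; exact ⟨p, hp, q, hq, rfl⟩

lemma exists_max : ∀ (s : Multiset L), s ≠ 0 →
    (∀ x ∈ s, ∀ y ∈ s, x ≤ y ∨ y ≤ x) → ∃ b ∈ s, ∀ x ∈ s, x ≤ b := by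
  intro s
  induction s using Multiset.induction_on with
  | empty => intro h; exact absurd rfl h
  | cons a s ih =>
    intro _ hc
    rcases eq_or_ne s 0 with rfl | hs
    · exact ⟨a, mem_cons_self _ _, by simp⟩
    · obtain ⟨b, hb, hmax⟩ :=
        ih hs (fun x hx y hy => hc _ (mem_cons_of_mem hx) _ (mem_cons_of_mem hy))
      rcases hc a (mem_cons_self _ _) b (mem_cons_of_mem hb) with h | h
      · refine ⟨b, mem_cons_of_mem hb, ?_⟩
        intro x hx
        rcases mem_cons.mp hx with rfl | hx
        · exact h
        · exact hmax x hx
      · refine ⟨a, mem_cons_self _ _, ?_⟩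
        intro x hx
        rcases mem_cons.mp hx with rfl | hx
        · exact le_rfl
        · exact (hmax x hx).trans h

/-- Key distributivity lemma: a chain element distributes over a sup of basics. -/
lemma inf_msup {a : L} {s : Multiset (L × L)}
    (hcomp : ∀ p ∈ s, a ≤ p.1 ∨ p.1 ≤ a)
    (hb : ∀ p ∈ s, ∀ q ∈ s, p.2 ≤ q.2 ∨ q.2 ≤ p.2) :
    a ⊓ msup s = msup (s.map fun p => (a ⊓ p.1, p.2)) := by
  classical
  apply le_antisymm
  · have hsplit : s.filter (fun p => a ≤ p.1) + s.filter (fun p => ¬ a ≤ p.1) = s :=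
      filter_add_not _ s
    set s1 := s.filter (fun p => a ≤ p.1) with hs1
    set s2 := s.filter (fun p => ¬ a ≤ p.1) with hs2
    have hs2a : msup s2 ≤ a := by
      apply msup_le
      intro p hp
      rw [hs2] at hp
      have hn : ¬ a ≤ p.1 := (mem_filter.mp hp).2
      have hp1 : p.1 ≤ a := (hcomp p (mem_of_mem_filter hp)).resolve_left hn
      exact inf_le_left.trans hp1
    have hmsup : msup s = msup s2 ⊔ msup s1 := by
      rw [← hsplit, msup_add, sup_comm]
    rw [hmsup, inf_comm, sup_inf_assoc_of_le _ hs2a]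
    apply _root_.sup_le
    · apply msup_le
      intro p hp
      rw [hs2] at hp
      have hn : ¬ a ≤ p.1 := (mem_filter.mp hp).2
      have hp1 : p.1 ≤ a := (hcomp p (mem_of_mem_filter hp)).resolve_left hn
      have : p.1 ⊓ p.2 = (a ⊓ p.1) ⊓ p.2 := by rw [inf_eq_right.mpr hp1]
      rw [this]
      exact le_msup (mem_map_of_mem (fun p => (a ⊓ p.1, p.2)) (mem_of_mem_filter hp))
    · rcases eq_or_ne s1 0 with h0 | hne
      · rw [h0]; simp
      · obtain ⟨b, hbmem, hbmax⟩ := exists_max (s1.map Prod.snd)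
          (by simpa using hne)
          (by
            rintro x hx y hy
            rcases mem_map.mp hx with ⟨p, hp, rfl⟩
            rcases mem_map.mp hy with ⟨q, hq, rfl⟩
            exact hb p (mem_of_mem_filter hp) q (mem_of_mem_filter hq))
        rcases mem_map.mp hbmem with ⟨q, hq, rfl⟩
        have hq' := hq
        rw [hs1] at hq'
        have hq1 : a ≤ q.1 := (mem_filter.mp hq').2
        have h1 : msup s1 ≤ q.2 := by
          apply msup_le
          intro p hp
          exact inf_le_right.trans (hbmax p.2 (mem_map_of_mem _ hp))
        calc msup s1 ⊓ a ≤ a ⊓ q.2 := le_inf inf_le_right ((inf_le_left).trans h1)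
          _ = (a ⊓ q.1) ⊓ q.2 := by rw [inf_eq_left.mpr hq1]
          _ ≤ _ := le_msup (mem_map_of_mem (fun p => (a ⊓ p.1, p.2)) (mem_of_mem_filter hq'))
  · apply msup_le
    intro p hp
    rcases mem_map.mp hp with ⟨q, hq, rfl⟩
    exact le_inf (inf_le_left.trans inf_le_left)
      (le_trans (inf_le_inf inf_le_right le_rfl) (le_msup hq))

lemma msup_map_swap (s : Multiset (L × L)) : msup (s.map Prod.swap) = msup s := by
  apply le_antisymm
  · apply msup_le
    intro p hp
    rcases mem_map.mp hp with ⟨q, hq, rfl⟩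
    simpa [Prod.swap, inf_comm] using le_msup hq
  · apply msup_le
    intro p hp
    simpa [Prod.swap, inf_comm] using le_msup (mem_map_of_mem Prod.swap hp)

lemma inf_msup_snd {b : L} {s : Multiset (L × L)}
    (hcomp : ∀ p ∈ s, b ≤ p.2 ∨ p.2 ≤ b)
    (ha : ∀ p ∈ s, ∀ q ∈ s, p.1 ≤ q.1 ∨ q.1 ≤ p.1) :
    b ⊓ msup s = msup (s.map fun p => (p.1, b ⊓ p.2)) := by
  have h := inf_msup (a := b) (s := s.map Prod.swap)
    (by
      rintro p hp
      rcases mem_map.mp hp with ⟨q, hq, rfl⟩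
      exact hcomp q hq)
    (by
      rintro p hp q hq
      rcases mem_map.mp hp with ⟨p', hp', rfl⟩
      rcases mem_map.mp hq with ⟨q', hq', rfl⟩
      exact ha p' hp' q' hq')
  rw [msup_map_swap] at h
  rw [h, ← msup_map_swap (s := s.map fun p => (p.1, b ⊓ p.2))]
  congr 1
  rw [Multiset.map_map, Multiset.map_map]
  rfl


variable (CA CB : Set L)

def Good (s : Multiset (L × L)) : Prop := ∀ p ∈ s, p.1 ∈ CA ∧ p.2 ∈ CB

variable {CA CB}

lemma good_of_le {s t : Multiset (L × L)} (h : s ≤ t) (ht : Good CA CB t) :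
    Good CA CB s := fun p hp => ht p (Multiset.mem_of_le h hp)

section Chains

variable (hCA : ∀ a ∈ CA, ∀ b ∈ CA, a ≤ b ∨ b ≤ a)
variable (hCB : ∀ a ∈ CB, ∀ b ∈ CB, a ≤ b ∨ b ≤ a)
variable (hCAi : ∀ a ∈ CA, ∀ b ∈ CA, a ⊓ b ∈ CA)
variable (hCBi : ∀ a ∈ CB, ∀ b ∈ CB, a ⊓ b ∈ CB)

include hCA hCB hCAi in
lemma key {N : ℕ}
    (IH : ∀ s t : Multiset (L × L), s.card + t.card ≤ N → Good CA CB s → Good CA CB t →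
      msup s ⊓ msup t ≤ msup (pw s t))
    (s t : Multiset (L × L)) (hcard : s.card + t.card ≤ N + 1)
    (hs : Good CA CB s) (ht : Good CA CB t)
    (a : L) (haCA : a ∈ CA)
    (hXY : msup s ⊓ msup t ≤ a)
    (ps : L × L) (hps : ps ∈ s) (hps1 : a ≤ ps.1)
    (qs : L × L) (hqs : qs ∈ t) (hqs1 : a ≤ qs.1)
    (hb : ps.2 ≤ qs.2) :
    msup s ⊓ msup t ≤ msup (pw s t) := by
  classical
  set f : L × L → L × L := fun p => (a ⊓ p.1, p.2) with hf
  have hsmap : a ⊓ msup s = msup (s.map f) :=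
    inf_msup (fun p hp => hCA a haCA p.1 (hs p hp).1)
      (fun p hp q hq => hCB p.2 (hs p hp).2 q.2 (hs q hq).2)
  have htmap : a ⊓ msup t = msup (t.map f) :=
    inf_msup (fun p hp => hCA a haCA p.1 (ht p hp).1)
      (fun p hp q hq => hCB p.2 (ht p hp).2 q.2 (ht q hq).2)
  have hstep : msup s ⊓ msup t = msup (s.map f) ⊓ msup (t.map f) := by
    rw [← hsmap, ← htmap]
    apply le_antisymm
    · exact le_inf (le_inf hXY inf_le_left) (le_inf hXY inf_le_right)
    · exact le_inf (inf_le_left.trans inf_le_right) (inf_le_right.trans inf_le_right)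
  -- peel the term ps
  have hserase : ps ::ₘ s.erase ps = s := cons_erase hps
  have hmapcons : s.map f = f ps ::ₘ (s.erase ps).map f := by
    conv_lhs => rw [← hserase]
    rw [Multiset.map_cons]
  have hfps : (f ps).1 ⊓ (f ps).2 = a ⊓ ps.2 := by
    simp only [hf]
    rw [inf_eq_left.mpr hps1]
  have hgle : a ⊓ ps.2 ≤ msup (t.map f) := by
    have hmem : f qs ∈ t.map f := mem_map_of_mem f hqs
    have : a ⊓ ps.2 ≤ (f qs).1 ⊓ (f qs).2 := by
      simp only [hf]
      exact le_inf (le_inf inf_le_left (inf_le_left.trans hqs1))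
        ((inf_le_right.trans hb))
    exact this.trans (le_msup hmem)
  have hmod : msup (s.map f) ⊓ msup (t.map f)
      = (a ⊓ ps.2) ⊔ (msup ((s.erase ps).map f) ⊓ msup (t.map f)) := by
    rw [hmapcons, msup_cons, hfps, sup_inf_assoc_of_le _ hgle]
  -- IH on the rest
  have hgood1 : Good CA CB ((s.erase ps).map f) := by
    intro p hp
    rcases mem_map.mp hp with ⟨q, hq, rfl⟩
    have := hs q (mem_of_mem_erase hq)
    exact ⟨hCAi a haCA q.1 this.1, this.2⟩
  have hgood2 : Good CA CB (t.map f) := by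
    intro p hp
    rcases mem_map.mp hp with ⟨q, hq, rfl⟩
    have := ht q hq
    exact ⟨hCAi a haCA q.1 this.1, this.2⟩
  have hcard' : ((s.erase ps).map f).card + (t.map f).card ≤ N := by
    have hsne : s ≠ 0 := by rintro rfl; simp at hps
    have h1 : 0 < s.card := Multiset.card_pos.mpr hsne
    rw [Multiset.card_map, Multiset.card_map, Multiset.card_erase_of_mem hps,
      Nat.pred_eq_sub_one]
    omega
  have hIH := IH _ _ hcard' hgood1 hgood2
  -- bounds into pw s t
  have hg2 : a ⊓ ps.2 ≤ msup (pw s t) := by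
    have hmem : (ps.1 ⊓ qs.1, ps.2 ⊓ qs.2) ∈ pw s t :=
      mem_pw.mpr ⟨ps, hps, qs, hqs, rfl⟩
    refine le_trans ?_ (le_msup hmem)
    exact le_inf (le_inf (inf_le_left.trans hps1) (inf_le_left.trans hqs1))
      (le_inf inf_le_right (inf_le_right.trans hb))
  have hpw2 : msup (pw ((s.erase ps).map f) (t.map f)) ≤ msup (pw s t) := by
    apply msup_le
    intro r hr
    rcases mem_pw.mp hr with ⟨p', hp', q', hq', rfl⟩
    rcases mem_map.mp hp' with ⟨p, hp, rfl⟩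
    rcases mem_map.mp hq' with ⟨q, hq, rfl⟩
    have hmem : (p.1 ⊓ q.1, p.2 ⊓ q.2) ∈ pw s t :=
      mem_pw.mpr ⟨p, mem_of_mem_erase hp, q, hq, rfl⟩
    refine le_trans ?_ (le_msup hmem)
    simp only [hf]
    exact inf_le_inf (inf_le_inf inf_le_right inf_le_right) le_rfl
  calc msup s ⊓ msup t = msup (s.map f) ⊓ msup (t.map f) := hstep
    _ = (a ⊓ ps.2) ⊔ (msup ((s.erase ps).map f) ⊓ msup (t.map f)) := hmod
    _ ≤ (a ⊓ ps.2) ⊔ msup (pw ((s.erase ps).map f) (t.map f)) := sup_le_sup_left hIH _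
    _ ≤ msup (pw s t) := _root_.sup_le hg2 hpw2

lemma msup_pw_comm (s t : Multiset (L × L)) : msup (pw s t) = msup (pw t s) := by
  have h : ∀ (u v : Multiset (L × L)), msup (pw u v) ≤ msup (pw v u) := by
    intro u v
    apply msup_le
    intro r hr
    rcases mem_pw.mp hr with ⟨p, hp, q, hq, rfl⟩
    have hmem : (q.1 ⊓ p.1, q.2 ⊓ p.2) ∈ pw v u := mem_pw.mpr ⟨q, hq, p, hp, rfl⟩
    refine le_trans ?_ (le_msup hmem)
    simp [inf_comm]
  exact le_antisymm (h s t) (h t s)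

include hCA hCB hCAi in
lemma main_le : ∀ (n : ℕ) (s t : Multiset (L × L)), s.card + t.card ≤ n →
    Good CA CB s → Good CA CB t → msup s ⊓ msup t ≤ msup (pw s t) := by
  intro n
  induction n with
  | zero =>
    intro s t hc hs ht
    have : s = 0 := by
      rw [← Multiset.card_eq_zero]; omega
    subst this
    simp
  | succ N IHn =>
    intro s t hcard hs ht
    rcases eq_or_ne s 0 with rfl | hsne
    · simp
    rcases eq_or_ne t 0 with rfl | htne
    · simp [pw]
    obtain ⟨b1, hb1mem, hb1max⟩ := exists_max (s.map Prod.fst)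
      (by simpa using hsne)
      (by
        rintro x hx y hy
        rcases mem_map.mp hx with ⟨p, hp, rfl⟩
        rcases mem_map.mp hy with ⟨q, hq, rfl⟩
        exact hCA p.1 (hs p hp).1 q.1 (hs q hq).1)
    rcases mem_map.mp hb1mem with ⟨pm, hpm, rfl⟩
    obtain ⟨b2, hb2mem, hb2max⟩ := exists_max (t.map Prod.fst)
      (by simpa using htne)
      (by
        rintro x hx y hy
        rcases mem_map.mp hx with ⟨p, hp, rfl⟩
        rcases mem_map.mp hy with ⟨q, hq, rfl⟩
        exact hCA p.1 (ht p hp).1 q.1 (ht q hq).1)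
    rcases mem_map.mp hb2mem with ⟨qm, hqm, rfl⟩
    set a : L := pm.1 ⊓ qm.1 with ha
    have haCA : a ∈ CA := hCAi pm.1 (hs pm hpm).1 qm.1 (ht qm hqm).1
    have hsle : msup s ≤ pm.1 := msup_le fun p hp =>
      inf_le_left.trans (hb1max p.1 (mem_map_of_mem _ hp))
    have htle : msup t ≤ qm.1 := msup_le fun p hp =>
      inf_le_left.trans (hb2max p.1 (mem_map_of_mem _ hp))
    have hXY : msup s ⊓ msup t ≤ a :=
      le_inf (inf_le_left.trans hsle) (inf_le_right.trans htle)
    rcases hCB pm.2 (hs pm hpm).2 qm.2 (ht qm hqm).2 with h | h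
    · exact key hCA hCB hCAi IHn s t hcard hs ht a haCA hXY pm hpm inf_le_left
        qm hqm inf_le_right h
    · rw [inf_comm, msup_pw_comm]
      have hXY' : msup t ⊓ msup s ≤ a := by rwa [inf_comm]
      exact key hCA hCB hCAi IHn t s (by omega) ht hs a haCA hXY' qm hqm inf_le_right
        pm hpm inf_le_left h

include hCA hCB hCAi in
lemma msup_inf_msup {s t : Multiset (L × L)} (hs : Good CA CB s) (ht : Good CA CB t) :
    msup s ⊓ msup t = msup (pw s t) := by
  apply le_antisymm
  · exact main_le hCA hCB hCAi (s.card + t.card) s t le_rfl hs ht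
  · apply msup_le
    intro r hr
    rcases mem_pw.mp hr with ⟨p, hp, q, hq, rfl⟩
    refine le_inf (le_trans ?_ (le_msup hp)) (le_trans ?_ (le_msup hq))
    · exact inf_le_inf inf_le_left inf_le_left
    · exact inf_le_inf inf_le_right inf_le_right

include hCAi hCBi in
lemma good_pw {s t : Multiset (L × L)} (hs : Good CA CB s) (ht : Good CA CB t) :
    Good CA CB (pw s t) := by
  intro r hr
  rcases mem_pw.mp hr with ⟨p, hp, q, hq, rfl⟩
  exact ⟨hCAi p.1 (hs p hp).1 q.1 (ht q hq).1, hCBi p.2 (hs p hp).2 q.2 (ht q hq).2⟩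

end Chains

end Modular

/-- the sublattice of submodules of `M` generated by two chains
`A_1 ⊆ … ⊆ A_m` and `B_1 ⊆ … ⊆ B_n` is distributive; in particular
`A i ⊓ (B j ⊔ B k ⊓ A l) = A i ⊓ B j ⊔ A i ⊓ B k ⊓ A l`, so any two filtrations
on a module are compatible. -/
theorem two_chains_generate_distributive_sublattice {R M : Type*} [Ring R]
    [AddCommGroup M] [Module R M] {m n : ℕ}
    (A : Fin m → Submodule R M) (B : Fin n → Submodule R M)
    (hA : Monotone A) (hB : Monotone B) :
    (∀ x ∈ latticeClosure (Set.range A ∪ Set.range B),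
      ∀ y ∈ latticeClosure (Set.range A ∪ Set.range B),
        ∀ z ∈ latticeClosure (Set.range A ∪ Set.range B),
          x ⊓ (y ⊔ z) = x ⊓ y ⊔ x ⊓ z) ∧
    (∀ (i l : Fin m) (j k : Fin n),
      A i ⊓ (B j ⊔ B k ⊓ A l) = A i ⊓ B j ⊔ A i ⊓ (B k ⊓ A l)) := by
  classical
  have chainA : ∀ a ∈ (insert ⊤ (Set.range A) : Set (Submodule R M)),
      ∀ b ∈ (insert ⊤ (Set.range A) : Set (Submodule R M)), a ≤ b ∨ b ≤ a := by
    rintro a (rfl | ⟨i, rfl⟩) b (rfl | ⟨j, rfl⟩)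
    · exact Or.inl le_rfl
    · exact Or.inr le_top
    · exact Or.inl le_top
    · rcases le_total i j with h | h
      · exact Or.inl (hA h)
      · exact Or.inr (hA h)
  have chainB : ∀ a ∈ (insert ⊤ (Set.range B) : Set (Submodule R M)),
      ∀ b ∈ (insert ⊤ (Set.range B) : Set (Submodule R M)), a ≤ b ∨ b ≤ a := by
    rintro a (rfl | ⟨i, rfl⟩) b (rfl | ⟨j, rfl⟩)
    · exact Or.inl le_rfl
    · exact Or.inr le_top
    · exact Or.inl le_top
    · rcases le_total i j with h | h
      · exact Or.inl (hB h)
      · exact Or.inr (hB h)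
  have infA : ∀ a ∈ (insert ⊤ (Set.range A) : Set (Submodule R M)),
      ∀ b ∈ (insert ⊤ (Set.range A) : Set (Submodule R M)),
        a ⊓ b ∈ (insert ⊤ (Set.range A) : Set (Submodule R M)) := by
    intro a ha b hb
    rcases chainA a ha b hb with h | h
    · rw [inf_eq_left.mpr h]; exact ha
    · rw [inf_eq_right.mpr h]; exact hb
  have infB : ∀ a ∈ (insert ⊤ (Set.range B) : Set (Submodule R M)),
      ∀ b ∈ (insert ⊤ (Set.range B) : Set (Submodule R M)),
        a ⊓ b ∈ (insert ⊤ (Set.range B) : Set (Submodule R M)) := by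
    intro a ha b hb
    rcases chainB a ha b hb with h | h
    · rw [inf_eq_left.mpr h]; exact ha
    · rw [inf_eq_right.mpr h]; exact hb
  set S : Set (Submodule R M) :=
    {x | ∃ s : Multiset (Submodule R M × Submodule R M),
      Good (insert ⊤ (Set.range A)) (insert ⊤ (Set.range B)) s ∧ msup s = x} with hSdef
  have hgen : Set.range A ∪ Set.range B ⊆ S := by
    rintro x (⟨i, rfl⟩ | ⟨j, rfl⟩)
    · refine ⟨{(A i, ⊤)}, ?_, by simp [msup]⟩
      intro p hp
      rw [Multiset.mem_singleton] at hp
      subst hp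
      exact ⟨Set.mem_insert_iff.mpr (Or.inr ⟨i, rfl⟩), Set.mem_insert _ _⟩
    · refine ⟨{((⊤ : Submodule R M), B j)}, ?_, by simp [msup]⟩
      intro p hp
      rw [Multiset.mem_singleton] at hp
      subst hp
      exact ⟨Set.mem_insert _ _, Set.mem_insert_iff.mpr (Or.inr ⟨j, rfl⟩)⟩
  have hsupS : SupClosed S := by
    rintro x ⟨s, hgs, rfl⟩ y ⟨t, hgt, rfl⟩
    exact ⟨s + t, fun p hp => (Multiset.mem_add.mp hp).elim (hgs p) (hgt p),
      msup_add s t⟩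
  have hinfS : InfClosed S := by
    rintro x ⟨s, hgs, rfl⟩ y ⟨t, hgt, rfl⟩
    exact ⟨pw s t, good_pw infA infB hgs hgt,
      (msup_inf_msup chainA chainB infA hgs hgt).symm⟩
  have hdist : ∀ x ∈ S, ∀ y ∈ S, ∀ z ∈ S, x ⊓ (y ⊔ z) = x ⊓ y ⊔ x ⊓ z := by
    rintro x ⟨s, hgs, rfl⟩ y ⟨t, hgt, rfl⟩ z ⟨u, hgu, rfl⟩
    apply le_antisymm
    · have hgtu : Good (insert ⊤ (Set.range A)) (insert ⊤ (Set.range B)) (t + u) :=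
        fun p hp => (Multiset.mem_add.mp hp).elim (hgt p) (hgu p)
      rw [← msup_add, msup_inf_msup chainA chainB infA hgs hgtu]
      apply msup_le
      intro r hr
      rcases mem_pw.mp hr with ⟨p, hp, q, hq, rfl⟩
      rcases Multiset.mem_add.mp hq with hq | hq
      · refine le_sup_left.trans' ?_
        exact le_inf (le_trans (inf_le_inf inf_le_left inf_le_left) (le_msup hp))
          (le_trans (inf_le_inf inf_le_right inf_le_right) (le_msup hq))
      · refine le_sup_right.trans' ?_
        exact le_inf (le_trans (inf_le_inf inf_le_left inf_le_left) (le_msup hp))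
          (le_trans (inf_le_inf inf_le_right inf_le_right) (le_msup hq))
    · exact _root_.sup_le (inf_le_inf_left _ le_sup_left) (inf_le_inf_left _ le_sup_right)
  have hclos : latticeClosure (Set.range A ∪ Set.range B) ⊆ S :=
    latticeClosure_min hgen ⟨hsupS, hinfS⟩
  have part1 : ∀ x ∈ latticeClosure (Set.range A ∪ Set.range B),
      ∀ y ∈ latticeClosure (Set.range A ∪ Set.range B),
        ∀ z ∈ latticeClosure (Set.range A ∪ Set.range B),
          x ⊓ (y ⊔ z) = x ⊓ y ⊔ x ⊓ z :=
    fun x hx y hy z hz => hdist x (hclos hx) y (hclos hy) z (hclos hz)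
  refine ⟨part1, ?_⟩
  intro i l j k
  have hmemA : ∀ i, A i ∈ latticeClosure (Set.range A ∪ Set.range B) :=
    fun i => subset_latticeClosure (Set.mem_union_left _ ⟨i, rfl⟩)
  have hmemB : ∀ j, B j ∈ latticeClosure (Set.range A ∪ Set.range B) :=
    fun j => subset_latticeClosure (Set.mem_union_right _ ⟨j, rfl⟩)
  have hz : B k ⊓ A l ∈ latticeClosure (Set.range A ∪ Set.range B) :=
    isSublattice_latticeClosure.infClosed (hmemB k) (hmemA l)
  exact part1 (A i) (hmemA i) (B j) (hmemB j) (B k ⊓ A l) hz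
end
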